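/- Let f be C⁵ on a neighbourhood of x₀ and fix v ∈ E. Define the nonlinear part f_nl(a) := f(x₀ + a) − f(x₀) − f′(x₀)(a). Then the four-point stencil for the second directional derivative is fifth-order accurate: the function ε ↦ 24 • f_nl((ε/2)•v) − 6 • f_nl(ε•v) + (8/9) • f_nl((3ε/2)•v) − ε² • f″(x₀)[v,v] is O(ε⁵) as ε → 0. -/

import Mathlib

open Topology Asymptotics Filter Set

private lemma step_bigO {F : Type*} [NormedAddCommGroup F] [NormedSpace ℝ F]
    {h h' : ℝ → F} {n : ℕ} {U : Set ℝ} (hU : U ∈ 𝓝 (0 : ℝ))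
    (hd : ∀ x ∈ U, HasDerivAt h (h' x) x) (h0 : h 0 = 0)
    (hO : h' =O[𝓝 (0 : ℝ)] fun x => x ^ n) :
    h =O[𝓝 (0 : ℝ)] fun x => x ^ (n + 1) := by
  rw [isBigO_iff] at hO
  obtain ⟨C, hC⟩ := hO
  rw [Metric.eventually_nhds_iff] at hC
  obtain ⟨δ₁, hδ₁, hb⟩ := hC
  obtain ⟨δ₂, hδ₂, hball⟩ := Metric.mem_nhds_iff.mp hU
  rw [isBigO_iff]
  refine ⟨|C|, Metric.eventually_nhds_iff.mpr ⟨min δ₁ δ₂ / 2, by positivity, ?_⟩⟩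
  intro x hx
  simp only [Real.dist_eq, sub_zero] at hx
  have habs : ∀ t ∈ Set.uIcc (0 : ℝ) x, |t| ≤ |x| := by
    intro t ht
    rw [Set.mem_uIcc] at ht
    rcases ht with ⟨h1, h2⟩ | ⟨h1, h2⟩ <;> rw [abs_le] <;>
      constructor <;> nlinarith [le_abs_self x, neg_abs_le x]
  have hmem : ∀ t ∈ Set.uIcc (0 : ℝ) x, t ∈ U := by
    intro t ht
    apply hball
    simp only [Metric.mem_ball, Real.dist_eq, sub_zero]
    calc |t| ≤ |x| := habs t ht
      _ < min δ₁ δ₂ / 2 := hx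
      _ ≤ δ₂ := by
        have h := min_le_right δ₁ δ₂
        linarith
  have hbnd : ∀ t ∈ Set.uIcc (0 : ℝ) x, ‖h' t‖ ≤ |C| * |x| ^ n := by
    intro t ht
    have hdist : dist t 0 < δ₁ := by
      simp only [Real.dist_eq, sub_zero]
      calc |t| ≤ |x| := habs t ht
        _ < min δ₁ δ₂ / 2 := hx
        _ ≤ δ₁ := by have := min_le_left δ₁ δ₂; linarith
    calc ‖h' t‖ ≤ C * ‖t ^ n‖ := hb hdist
      _ ≤ |C| * |t| ^ n := by
          rw [norm_pow, Real.norm_eq_abs]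
          exact mul_le_mul_of_nonneg_right (le_abs_self C) (by positivity)
      _ ≤ |C| * |x| ^ n := by
          exact mul_le_mul_of_nonneg_left (pow_le_pow_left₀ (abs_nonneg t) (habs t ht) n) (abs_nonneg C)
  have key := (convex_uIcc (0 : ℝ) x).norm_image_sub_le_of_norm_hasDerivWithin_le
    (fun t ht => (hd t (hmem t ht)).hasDerivWithinAt) hbnd Set.left_mem_uIcc Set.right_mem_uIcc
  rw [h0, sub_zero, sub_zero, Real.norm_eq_abs] at key
  calc ‖h x‖ ≤ |C| * |x| ^ n * |x| := key
    _ = |C| * ‖x ^ (n + 1)‖ := by rw [norm_pow, Real.norm_eq_abs, pow_succ]; ring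

private lemma taylor5 {F : Type*} [NormedAddCommGroup F] [NormedSpace ℝ F]
    (g : ℝ → F) (hg : ContDiffAt ℝ 5 g 0) :
    (fun x : ℝ => g x - g 0 - x • deriv g 0 - (x ^ 2 / 2) • iteratedDeriv 2 g 0
        - (x ^ 3 / 6) • iteratedDeriv 3 g 0 - (x ^ 4 / 24) • iteratedDeriv 4 g 0)
      =O[𝓝 (0 : ℝ)] fun x => x ^ 5 := by
  obtain ⟨u, hu, hgu⟩ := hg.contDiffOn le_rfl (by simp)
  set U : Set ℝ := interior u with hUdef
  have hUo : IsOpen U := isOpen_interior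
  have hU0 : (0 : ℝ) ∈ U := mem_interior_iff_mem_nhds.mpr hu
  have hUn : U ∈ 𝓝 (0 : ℝ) := hUo.mem_nhds hU0
  have hgU : ContDiffOn ℝ 5 g U := hgu.mono interior_subset
  have uniq : UniqueDiffOn ℝ U := hUo.uniqueDiffOn
  have heq : ∀ j : ℕ, Set.EqOn (iteratedDerivWithin j g U) (iteratedDeriv j g) U := by
    intro j y hy
    rw [iteratedDerivWithin_eq_iteratedFDerivWithin, iteratedDeriv_eq_iteratedFDeriv,
      iteratedFDerivWithin_of_isOpen j hUo hy]
  have key : ∀ j : ℕ, j < 5 → ∀ x ∈ U, HasDerivAt (iteratedDeriv j g) (iteratedDeriv (j + 1) g x) x := by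
    intro j hj x hx
    have h1 : DifferentiableOn ℝ (iteratedDerivWithin j g U) U :=
      hgU.differentiableOn_iteratedDerivWithin (by exact_mod_cast hj) uniq
    have h2 : DifferentiableAt ℝ (iteratedDeriv j g) x := by
      have h3 := (h1 x hx).differentiableAt (hUo.mem_nhds hx)
      exact h3.congr_of_eventuallyEq (Filter.eventuallyEq_of_mem (hUo.mem_nhds hx) fun y hy => ((heq j) hy).symm)
    rw [iteratedDeriv_succ]
    exact h2.hasDerivAt
  have hcont : ContinuousAt (iteratedDeriv 5 g) 0 := by
    have h1 : ContinuousOn (iteratedDerivWithin 5 g U) U :=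
      hgU.continuousOn_iteratedDerivWithin le_rfl uniq
    have h2 := (h1 0 hU0).continuousAt hUn
    exact h2.congr (Filter.eventuallyEq_of_mem hUn fun y hy => ((heq 5) hy))
  have base : (fun x : ℝ => iteratedDeriv 5 g x) =O[𝓝 (0 : ℝ)] fun x => x ^ 0 := by
    refine (hcont.tendsto.isBigO_one ℝ).trans ?_
    exact (isBigO_refl _ _).congr_left fun x => (pow_zero x).symm
  -- ladder
  have s4 : (fun x : ℝ => iteratedDeriv 4 g x - iteratedDeriv 4 g 0) =O[𝓝 (0 : ℝ)]
      fun x => x ^ 1 :=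
    step_bigO hUn (fun x hx => (key 4 (by norm_num) x hx).sub_const _) (by simp) base
  have s3 : (fun x : ℝ => iteratedDeriv 3 g x - iteratedDeriv 3 g 0
      - x • iteratedDeriv 4 g 0) =O[𝓝 (0 : ℝ)] fun x => x ^ 2 := by
    refine step_bigO hUn (fun x hx => ?_) (by simp) s4
    simpa [Pi.sub_def] using ((key 3 (by norm_num) x hx).sub_const _).sub
      ((hasDerivAt_id x).smul_const (iteratedDeriv 4 g 0))
  have s2 : (fun x : ℝ => iteratedDeriv 2 g x - iteratedDeriv 2 g 0
      - x • iteratedDeriv 3 g 0 - (x ^ 2 / 2) • iteratedDeriv 4 g 0)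
      =O[𝓝 (0 : ℝ)] fun x => x ^ 3 := by
    refine step_bigO hUn (fun x hx => ?_) (by simp) s3
    have hx2 : HasDerivAt (fun y : ℝ => y ^ 2 / 2) x x := by
      have h := (hasDerivAt_pow 2 x).div_const 2
      exact h.congr_deriv (by ring)
    simpa [Pi.sub_def] using (((key 2 (by norm_num) x hx).sub_const _).sub
      ((hasDerivAt_id x).smul_const (iteratedDeriv 3 g 0))).sub
      (hx2.smul_const (iteratedDeriv 4 g 0))
  have key1 : ∀ x ∈ U, HasDerivAt (deriv g) (iteratedDeriv 2 g x) x := by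
    have h := key 1 (by norm_num)
    rwa [iteratedDeriv_one] at h
  have key0 : ∀ x ∈ U, HasDerivAt g (deriv g x) x := by
    have h := key 0 (by norm_num)
    rwa [iteratedDeriv_zero, show (0 + 1) = 1 from rfl, iteratedDeriv_one] at h
  have s1 : (fun x : ℝ => deriv g x - deriv g 0 - x • iteratedDeriv 2 g 0
      - (x ^ 2 / 2) • iteratedDeriv 3 g 0 - (x ^ 3 / 6) • iteratedDeriv 4 g 0)
      =O[𝓝 (0 : ℝ)] fun x => x ^ 4 := by
    refine step_bigO hUn (fun x hx => ?_) (by simp) s2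
    have hx2 : HasDerivAt (fun y : ℝ => y ^ 2 / 2) x x := by
      have h := (hasDerivAt_pow 2 x).div_const 2
      exact h.congr_deriv (by ring)
    have hx3 : HasDerivAt (fun y : ℝ => y ^ 3 / 6) (x ^ 2 / 2) x := by
      have h := (hasDerivAt_pow 3 x).div_const 6
      exact h.congr_deriv (by ring)
    simpa [Pi.sub_def] using ((((key1 x hx).sub_const _).sub
      ((hasDerivAt_id x).smul_const (iteratedDeriv 2 g 0))).sub
      (hx2.smul_const (iteratedDeriv 3 g 0))).sub
      (hx3.smul_const (iteratedDeriv 4 g 0))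
  refine step_bigO hUn (fun x hx => ?_) (by simp) s1
  have hx2 : HasDerivAt (fun y : ℝ => y ^ 2 / 2) x x := by
    have h := (hasDerivAt_pow 2 x).div_const 2
    exact h.congr_deriv (by ring)
  have hx3 : HasDerivAt (fun y : ℝ => y ^ 3 / 6) (x ^ 2 / 2) x := by
    have h := (hasDerivAt_pow 3 x).div_const 6
    exact h.congr_deriv (by ring)
  have hx4 : HasDerivAt (fun y : ℝ => y ^ 4 / 24) (x ^ 3 / 6) x := by
    have h := (hasDerivAt_pow 4 x).div_const 24
    exact h.congr_deriv (by ring)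
  simpa [Pi.sub_def] using (((((key0 x hx).sub_const _).sub
    ((hasDerivAt_id x).smul_const (deriv g 0))).sub
    (hx2.smul_const (iteratedDeriv 2 g 0))).sub
    (hx3.smul_const (iteratedDeriv 3 g 0))).sub
    (hx4.smul_const (iteratedDeriv 4 g 0))

/-- Fourth-order-accurate stencil for the second directional derivative:
`24 • f_nl((ε/2)•v) - 6 • f_nl(ε•v) + (8/9) • f_nl((3ε/2)•v) = ε² • f″(x₀)[v,v] + O(ε⁵)`. -/
theorem second_directional_derivative_stencil_order5
    {E F : Type*} [NormedAddCommGroup E] [NormedSpace ℝ E] [CompleteSpace E]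
    [NormedAddCommGroup F] [NormedSpace ℝ F] [CompleteSpace F]
    (f : E → F) (x₀ v : E)
    (hf : ContDiffAt ℝ 5 f x₀)
    (fnl : E → F) (hfnl : ∀ a, fnl a = f (x₀ + a) - f x₀ - fderiv ℝ f x₀ a) :
    (fun ε : ℝ =>
        (24 : ℝ) • fnl ((ε / 2) • v) - (6 : ℝ) • fnl (ε • v)
          + (8 / 9 : ℝ) • fnl ((3 * ε / 2) • v)
          - ε ^ 2 • iteratedFDeriv ℝ 2 f x₀ ![v, v])
      =O[𝓝 (0 : ℝ)] fun ε => ε ^ 5 := by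
  set u : ℝ → F := fun t => f (x₀ + t • v) with hudef
  have hline : ∀ t : ℝ, HasDerivAt (fun s : ℝ => x₀ + s • v) v t := by
    intro t
    simpa using ((hasDerivAt_id t).smul_const v).const_add x₀
  have hu : ContDiffAt ℝ 5 u 0 := by
    have hl : ContDiff ℝ 5 (fun t : ℝ => x₀ + t • v) :=
      contDiff_const.add (contDiff_id.smul contDiff_const)
    exact ContDiffAt.comp 0 (by simpa using hf) hl.contDiffAt
  have hu0 : u 0 = f x₀ := by simp [hudef]
  have hd1 : deriv u 0 = fderiv ℝ f x₀ v := by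
    have hdf : HasFDerivAt f (fderiv ℝ f x₀) (x₀ + (0 : ℝ) • v) := by
      rw [zero_smul, add_zero]
      exact (hf.differentiableAt (by norm_num)).hasFDerivAt
    have : HasDerivAt u (fderiv ℝ f x₀ v) 0 := by
      have h := hdf.comp_hasDerivAt 0 (hline 0)
      exact h
    exact this.deriv
  -- second derivative along the line
  obtain ⟨V, hV, hfV⟩ := hf.contDiffOn le_rfl (by simp)
  have hVi : IsOpen (interior V) := isOpen_interior
  have hx₀V : x₀ ∈ interior V := mem_interior_iff_mem_nhds.mpr hV
  have hfVi : ContDiffOn ℝ 5 f (interior V) := hfV.mono interior_subset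
  have hd2 : iteratedDeriv 2 u 0 = iteratedFDeriv ℝ 2 f x₀ ![v, v] := by
    have hev : ∀ᶠ t in 𝓝 (0 : ℝ), deriv u t = fderiv ℝ f (x₀ + t • v) v := by
      have hcontline : Continuous (fun t : ℝ => x₀ + t • v) :=
        continuous_const.add (continuous_id.smul continuous_const)
      have hW : (fun t : ℝ => x₀ + t • v) ⁻¹' interior V ∈ 𝓝 (0 : ℝ) := by
        apply hcontline.continuousAt.preimage_mem_nhds
        rw [show x₀ + (0 : ℝ) • v = x₀ by simp]
        exact hVi.mem_nhds hx₀V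
      filter_upwards [hW] with t ht
      have hdf : DifferentiableAt ℝ f (x₀ + t • v) :=
        (hfVi.contDiffAt (hVi.mem_nhds ht)).differentiableAt (by norm_num)
      exact (hdf.hasFDerivAt.comp_hasDerivAt t (hline t)).deriv
    have h2 : iteratedDeriv 2 u 0 = deriv (fun t : ℝ => fderiv ℝ f (x₀ + t • v) v) 0 := by
      rw [show (2 : ℕ) = 1 + 1 from rfl, iteratedDeriv_succ, iteratedDeriv_one]
      exact Filter.EventuallyEq.deriv_eq hev
    have hdf' : DifferentiableAt ℝ (fderiv ℝ f) x₀ :=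
      (hf.fderiv_right (m := 1) (by norm_num)).differentiableAt (by norm_num)
    have hdf'' : HasFDerivAt (fderiv ℝ f) (fderiv ℝ (fderiv ℝ f) x₀) (x₀ + (0 : ℝ) • v) := by
      rw [zero_smul, add_zero]
      exact hdf'.hasFDerivAt
    have hc : HasDerivAt (fun t : ℝ => fderiv ℝ f (x₀ + t • v))
        (fderiv ℝ (fderiv ℝ f) x₀ v) 0 := by
      have h := hdf''.comp_hasDerivAt 0 (hline 0)
      exact h
    have hw : HasDerivAt (fun t : ℝ => fderiv ℝ f (x₀ + t • v) v)
        (fderiv ℝ (fderiv ℝ f) x₀ v v) 0 := by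
      have h := hc.clm_apply (hasDerivAt_const 0 v)
      simpa using h
    rw [h2, hw.deriv, iteratedFDeriv_two_apply]
    simp
  have hR := taylor5 u hu
  set R : ℝ → F := fun x => u x - u 0 - x • deriv u 0 - (x ^ 2 / 2) • iteratedDeriv 2 u 0
      - (x ^ 3 / 6) • iteratedDeriv 3 u 0 - (x ^ 4 / 24) • iteratedDeriv 4 u 0 with hRdef
  have comb : ∀ ε : ℝ,
      (24 : ℝ) • fnl ((ε / 2) • v) - (6 : ℝ) • fnl (ε • v)
        + (8 / 9 : ℝ) • fnl ((3 * ε / 2) • v)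
        - ε ^ 2 • iteratedFDeriv ℝ 2 f x₀ ![v, v]
      = (24 : ℝ) • R (ε / 2) - (6 : ℝ) • R ε + (8 / 9 : ℝ) • R (3 * ε / 2) := by
    intro ε
    have e1 : fnl ((ε / 2) • v) = u (ε / 2) - u 0 - (ε / 2) • fderiv ℝ f x₀ v := by
      rw [hfnl, hu0, map_smul]
    have e2 : fnl (ε • v) = u ε - u 0 - ε • fderiv ℝ f x₀ v := by
      rw [hfnl, hu0, map_smul]
    have e3 : fnl ((3 * ε / 2) • v) = u (3 * ε / 2) - u 0 - (3 * ε / 2) • fderiv ℝ f x₀ v := by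
      rw [hfnl, hu0, map_smul]
    rw [e1, e2, e3, hRdef, ← hd2, hd1]
    simp only []
    module
  have hRt : ∀ c : ℝ, c ≠ 0 → (fun ε : ℝ => R (c * ε)) =O[𝓝 (0 : ℝ)] fun ε => ε ^ 5 := by
    intro c hc
    have htend : Filter.Tendsto (fun ε : ℝ => c * ε) (𝓝 0) (𝓝 0) := by
      have h : Filter.Tendsto (fun ε : ℝ => c * ε) (𝓝 0) (𝓝 (c * 0)) :=
        (continuous_const.mul continuous_id).tendsto (0 : ℝ)
      rw [mul_zero] at h; exact h
    have h1 := hR.comp_tendsto htend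
    refine h1.trans ?_
    have h2 := (isBigO_refl (fun ε : ℝ => ε ^ 5) (𝓝 0)).const_mul_left (c ^ 5)
    exact h2.congr_left fun ε => by simp only [Function.comp_apply]; ring
  have h1 : (fun ε : ℝ => R (ε / 2)) =O[𝓝 (0 : ℝ)] fun ε => ε ^ 5 := by
    have := hRt (1 / 2) (by norm_num)
    exact this.congr_left fun ε => by rw [show (1 / 2 : ℝ) * ε = ε / 2 by ring]
  have h2 : (fun ε : ℝ => R ε) =O[𝓝 (0 : ℝ)] fun ε => ε ^ 5 := hR
  have h3 : (fun ε : ℝ => R (3 * ε / 2)) =O[𝓝 (0 : ℝ)] fun ε => ε ^ 5 := by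
    have := hRt (3 / 2) (by norm_num)
    exact this.congr_left fun ε => by rw [show (3 / 2 : ℝ) * ε = 3 * ε / 2 by ring]
  have hfinal := ((h1.const_smul_left (24 : ℝ)).sub (h2.const_smul_left (6 : ℝ))).add
    (h3.const_smul_left ((8 / 9 : ℝ)))
  exact (hfinal.congr_left fun ε => (comb ε).symm).congr_left fun ε => rfl
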